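/- For all real x ≥ 3, one has ψ'(x) < exp(1/x − 1/(24x⁴) + 7/(360x⁶) + 1/(90x⁷)) − 1, where ψ' is the trigamma function. -/

import Mathlib

open Real Filter

noncomputable def digamma (x : ℝ) : ℝ := deriv (fun t : ℝ => Real.log (Real.Gamma t)) x

noncomputable def trigamma (x : ℝ) : ℝ := ∑' n : ℕ, 1 / (x + n) ^ 2

noncomputable def Uf (x : ℝ) : ℝ := 1/x + 1/(2*x^2) + 1/(6*x^3) - 1/(30*x^5) + 1/(42*x^7)

lemma pow_helper {u : ℝ} (hu0 : 0 ≤ u) (hu3 : u ≤ 1/3) (j k : ℕ) (h : k = 8 + j) :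
    u^k ≤ u^8 * (1/3:ℝ)^j := by
  subst h
  rw [pow_add]
  exact mul_le_mul_of_nonneg_left (pow_le_pow_left₀ hu0 hu3 j) (pow_nonneg hu0 8)

lemma summable_tri {x : ℝ} (hx : 0 < x) : Summable (fun n : ℕ => 1/(x+n)^2) := by
  rw [← summable_nat_add_iff 1]
  have hbase : Summable (fun n : ℕ => 1/((n:ℝ)+1)^2) := by
    have h2 : Summable (fun n : ℕ => 1/((n:ℝ))^2) := Real.summable_one_div_nat_pow.mpr (by norm_num)
    have := (summable_nat_add_iff 1).mpr h2
    refine this.congr (fun n => ?_)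
    push_cast
    ring
  refine Summable.of_nonneg_of_le (fun n => by positivity) (fun n => ?_) hbase
  have h1 : (0:ℝ) < (n:ℝ)+1 := by positivity
  have h2 : ((n:ℝ)+1) ≤ x + ((n:ℕ)+1 : ℕ) := by push_cast; linarith
  rw [div_le_div_iff₀ (by positivity) (by positivity)]
  nlinarith

lemma trigamma_rec {x : ℝ} (hx : 0 < x) : trigamma x = 1/x^2 + trigamma (x+1) := by
  unfold trigamma
  rw [Summable.tsum_eq_zero_add (summable_tri hx)]
  congr 1
  · norm_num
  · refine tsum_congr (fun n => ?_)
    push_cast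
    ring_nf

lemma trigamma_le {y : ℝ} (hy : 2 ≤ y) : trigamma y ≤ 1/(y-1) := by
  have hy1 : (0:ℝ) < y - 1 := by linarith
  have hy0 : (0:ℝ) < y := by linarith
  have hts : HasSum (fun n : ℕ => 1/(y-1+n) - 1/(y+n)) (1/(y-1)) := by
    have hnn : ∀ n : ℕ, 0 ≤ 1/(y-1+(n:ℝ)) - 1/(y+n) := by
      intro n
      have h1 : (0:ℝ) < y - 1 + n := by positivity
      have h2 : y - 1 + (n:ℝ) ≤ y + n := by linarith
      have := one_div_le_one_div_of_le h1 h2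
      linarith
    rw [hasSum_iff_tendsto_nat_of_nonneg hnn]
    have hps : ∀ n : ℕ, ∑ i ∈ Finset.range n, (1/(y-1+(i:ℝ)) - 1/(y+i)) = 1/(y-1) - 1/(y-1+n) := by
      intro n
      calc ∑ i ∈ Finset.range n, (1/(y-1+(i:ℝ)) - 1/(y+i))
          = ∑ i ∈ Finset.range n,
              ((fun i : ℕ => 1/(y-1+(i:ℝ))) i - (fun i : ℕ => 1/(y-1+(i:ℝ))) (i+1)) := by
            refine Finset.sum_congr rfl (fun i _ => ?_)
            push_cast
            ring_nf
        _ = (fun i : ℕ => 1/(y-1+(i:ℝ))) 0 - (fun i : ℕ => 1/(y-1+(i:ℝ))) n :=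
            Finset.sum_range_sub' _ n
        _ = 1/(y-1) - 1/(y-1+n) := by norm_num
    simp only [hps]
    have htop : Tendsto (fun n : ℕ => y - 1 + (n:ℝ)) atTop atTop :=
      tendsto_atTop_add_const_left _ _ tendsto_natCast_atTop_atTop
    have h0 : Tendsto (fun n : ℕ => (y - 1 + (n:ℝ))⁻¹) atTop (nhds 0) :=
      htop.inv_tendsto_atTop
    have : Tendsto (fun n : ℕ => 1/(y-1) - 1/(y-1+(n:ℝ))) atTop (nhds (1/(y-1) - 0)) := by
      refine Tendsto.sub tendsto_const_nhds ?_
      simpa [one_div] using h0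
    simpa using this
  have hle : ∀ n : ℕ, 1/(y+n)^2 ≤ 1/(y-1+n) - 1/(y+n) := by
    intro n
    have h1 : (0:ℝ) < y - 1 + n := by positivity
    have h2 : (0:ℝ) < y + n := by positivity
    have heq : 1/(y-1+(n:ℝ)) - 1/(y+n) = 1/((y-1+n)*(y+n)) := by
      rw [div_sub_div _ _ h1.ne' h2.ne']
      norm_num
    rw [heq, div_le_div_iff₀ (by positivity) (by positivity)]
    nlinarith
  calc trigamma y ≤ ∑' n : ℕ, (1/(y-1+n) - 1/(y+n)) :=
        Summable.tsum_le_tsum hle (summable_tri hy0) hts.summable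
    _ = 1/(y-1) := hts.tsum_eq

lemma Uf_pos {y : ℝ} (hy : 3 ≤ y) : 0 < Uf y := by
  have hy0 : (0:ℝ) < y := by linarith
  have h : Uf y = (210*y^6 + 105*y^5 + 35*y^4 - 7*y^2 + 5)/(210*y^7) := by
    unfold Uf; field_simp; ring
  rw [h]
  have h1 : 1 ≤ y^2 := by nlinarith
  have hnum : 0 < 210*y^6 + 105*y^5 + 35*y^4 - 7*y^2 + 5 := by
    nlinarith [h1, sq_nonneg y, pow_pos hy0 6, pow_pos hy0 5]
  positivity

lemma Uf_diff {y : ℝ} (hy : 0 < y) : 1/y^2 < Uf y - Uf (y+1) := by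
  have hy1 : (0:ℝ) < y + 1 := by linarith
  have h : Uf y - Uf (y+1) - 1/y^2
      = (63*y^4 + 126*y^3 + 98*y^2 + 35*y + 5)/(210*y^7*(y+1)^7) := by
    unfold Uf; field_simp; ring
  have hpos : 0 < (63*y^4 + 126*y^3 + 98*y^2 + 35*y + 5)/(210*y^7*(y+1)^7) := by positivity
  linarith [h ▸ hpos]

lemma tri_lt_Uf {x : ℝ} (hx : 3 ≤ x) : trigamma x < Uf x := by
  have key : ∀ y : ℝ, 3 ≤ y → trigamma y - Uf y ≤ 0 := by
    intro y hy
    have mono : ∀ n : ℕ, trigamma y - Uf y ≤ trigamma (y+n) - Uf (y+n) := by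
      intro n
      induction n with
      | zero => simp
      | succ k ih =>
        have hyk : (0:ℝ) < y + k := by positivity
        have hrec := trigamma_rec hyk
        have hdiff := Uf_diff hyk
        have : trigamma (y+k) - Uf (y+k) ≤ trigamma (y+k+1) - Uf (y+k+1) := by linarith
        push_cast
        rw [show y + ((k:ℝ)+1) = y + (k:ℝ) + 1 by ring]
        linarith
    have hbound : ∀ n : ℕ, trigamma y - Uf y ≤ 1/((n:ℝ)+2) := by
      intro n
      have h2 : (2:ℝ) ≤ y + n := by
        have : (0:ℝ) ≤ n := Nat.cast_nonneg n
        linarith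
      have h3 : (3:ℝ) ≤ y + n := by
        have : (0:ℝ) ≤ n := Nat.cast_nonneg n
        linarith
      have hle := trigamma_le h2
      have hU := Uf_pos h3
      have hd : 1/(y+(n:ℝ)-1) ≤ 1/((n:ℝ)+2) := by
        apply one_div_le_one_div_of_le (by positivity)
        linarith
      calc trigamma y - Uf y ≤ trigamma (y+n) - Uf (y+n) := mono n
        _ ≤ 1/(y+(n:ℝ)-1) - Uf (y+n) := by linarith
        _ ≤ 1/((n:ℝ)+2) := by linarith
    have hlim : Tendsto (fun n : ℕ => 1/((n:ℝ)+2)) atTop (nhds 0) := by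
      have htop : Tendsto (fun n : ℕ => (n:ℝ)+2) atTop atTop :=
        tendsto_atTop_add_const_right _ _ tendsto_natCast_atTop_atTop
      simp only [one_div]
      exact htop.inv_tendsto_atTop
    exact ge_of_tendsto' hlim hbound
  have hx0 : (0:ℝ) < x := by linarith
  have hrec := trigamma_rec hx0
  have hdiff := Uf_diff hx0
  have h1 := key (x+1) (by linarith)
  linarith

lemma ulemma {u : ℝ} (hu0 : 0 < u) (hu3 : u ≤ 1/3) :
    1 + (u + u^2/2 + u^3/6 - u^5/30 + u^7/42)
      ≤ ∑ i ∈ Finset.range 9, (u - u^4/24 + 7*u^6/360 + u^7/90)^i / (Nat.factorial i) := by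
  set E := u - u^4/24 + 7*u^6/360 + u^7/90 with hE
  have hsum : ∑ i ∈ Finset.range 9, E^i / (Nat.factorial i)
      = 1 + E + E^2/2 + E^3/6 + E^4/24 + E^5/120 + E^6/720 + E^7/5040 + E^8/40320 := by
    simp [Finset.sum_range_succ, Nat.factorial]
    try ring
  rw [hsum]
  have hid : (1 + E + E^2/2 + E^3/6 + E^4/24 + E^5/120 + E^6/720 + E^7/5040 + E^8/40320) - (1 + (u + u^2/2 + u^3/6 - u^5/30 + u^7/42)) = (403/20160) * u^8 + (161/17280) * u^9 + (77/34560) * u^10 + (-619/1209600) * u^11 + (-37/69120) * u^12 + (11/207360) * u^13 + (4001/14515200) * u^14 + (497/2488320) * u^15 + (3169/39813120) * u^16 + (1217/110592000) * u^17 + (-134603/17915904000) * u^18 + (-72569/17915904000) * u^19 + (15803/17915904000) * u^20 + (442559/214990848000) * u^21 + (184843/143327232000) * u^22 + (913427/2149908480000) * u^23 + (709391/51597803520000) * u^24 + (-3082177/51597803520000) * u^25 + (-2275997/103195607040000) * u^26 + (588077/77396705280000) * u^27 + (104935337/8668430991360000) * u^28 + (55546193/8668430991360000) * u^29 + (134269321/92876046336000000)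 * u^30 + (-33593519/92876046336000000) * u^31 + (-5196352907/13869489586176000000) * u^32 + (-16057877/278628139008000000) * u^33 + (54798263/743008370688000000) * u^34 + (25448119/433421549568000000) * u^35 + (3669487097/200612260085760000000) * u^36 + (-20288783/25076532510720000000) * u^37 + (-59671949/20061226008576000000) * u^38 + (-20467051/25076532510720000000) * u^39 + (392600887/1203673560514560000000) * u^40 + (205403/601836780257280000) * u^41 + (513080627/4513775851929600000000) * u^42 + (471623/225688792596480000000) * u^43 + (-12684307/1003061300428800000000) * u^44 + (-4120823/1128443962982400000000) * u^45 + (14207351/13541327555788800000000) * u^46 + (3816719/3385331888947200000000) * u^47 + (589455223/1624959306694656000000000) * u^48 + (8660263/355459848339456000000000) * u^49 + (-3798377/177729924169728000000000) * u^50 + (-18473/3173748645888000000000) * u^51 + (1057/634749729177600000000) * u^52 + (2161/1388515032576000000000) * u^53 + (49/99179645184000000000) * u^54 + (1/12397455648000000000) * u^55 + (1/173564379072000000000) * u^56 := by simp only [hE]; ring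
  have hp8 : (0:ℝ) ≤ u^8 := by positivity
  have hp9 : (0:ℝ) ≤ u^9 := by positivity
  have hp10 : (0:ℝ) ≤ u^10 := by positivity
  have hn11 : u^11 ≤ u^8 * (1/3:ℝ)^3 := pow_helper hu0.le hu3 3 11 rfl
  norm_num at hn11
  have hn12 : u^12 ≤ u^8 * (1/3:ℝ)^4 := pow_helper hu0.le hu3 4 12 rfl
  norm_num at hn12
  have hp13 : (0:ℝ) ≤ u^13 := by positivity
  have hp14 : (0:ℝ) ≤ u^14 := by positivity
  have hp15 : (0:ℝ) ≤ u^15 := by positivity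
  have hp16 : (0:ℝ) ≤ u^16 := by positivity
  have hp17 : (0:ℝ) ≤ u^17 := by positivity
  have hn18 : u^18 ≤ u^8 * (1/3:ℝ)^10 := pow_helper hu0.le hu3 10 18 rfl
  norm_num at hn18
  have hn19 : u^19 ≤ u^8 * (1/3:ℝ)^11 := pow_helper hu0.le hu3 11 19 rfl
  norm_num at hn19
  have hp20 : (0:ℝ) ≤ u^20 := by positivity
  have hp21 : (0:ℝ) ≤ u^21 := by positivity
  have hp22 : (0:ℝ) ≤ u^22 := by positivity
  have hp23 : (0:ℝ) ≤ u^23 := by positivity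
  have hp24 : (0:ℝ) ≤ u^24 := by positivity
  have hn25 : u^25 ≤ u^8 * (1/3:ℝ)^17 := pow_helper hu0.le hu3 17 25 rfl
  norm_num at hn25
  have hn26 : u^26 ≤ u^8 * (1/3:ℝ)^18 := pow_helper hu0.le hu3 18 26 rfl
  norm_num at hn26
  have hp27 : (0:ℝ) ≤ u^27 := by positivity
  have hp28 : (0:ℝ) ≤ u^28 := by positivity
  have hp29 : (0:ℝ) ≤ u^29 := by positivity
  have hp30 : (0:ℝ) ≤ u^30 := by positivity
  have hn31 : u^31 ≤ u^8 * (1/3:ℝ)^23 := pow_helper hu0.le hu3 23 31 rfl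
  norm_num at hn31
  have hn32 : u^32 ≤ u^8 * (1/3:ℝ)^24 := pow_helper hu0.le hu3 24 32 rfl
  norm_num at hn32
  have hn33 : u^33 ≤ u^8 * (1/3:ℝ)^25 := pow_helper hu0.le hu3 25 33 rfl
  norm_num at hn33
  have hp34 : (0:ℝ) ≤ u^34 := by positivity
  have hp35 : (0:ℝ) ≤ u^35 := by positivity
  have hp36 : (0:ℝ) ≤ u^36 := by positivity
  have hn37 : u^37 ≤ u^8 * (1/3:ℝ)^29 := pow_helper hu0.le hu3 29 37 rfl
  norm_num at hn37
  have hn38 : u^38 ≤ u^8 * (1/3:ℝ)^30 := pow_helper hu0.le hu3 30 38 rfl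
  norm_num at hn38
  have hn39 : u^39 ≤ u^8 * (1/3:ℝ)^31 := pow_helper hu0.le hu3 31 39 rfl
  norm_num at hn39
  have hp40 : (0:ℝ) ≤ u^40 := by positivity
  have hp41 : (0:ℝ) ≤ u^41 := by positivity
  have hp42 : (0:ℝ) ≤ u^42 := by positivity
  have hp43 : (0:ℝ) ≤ u^43 := by positivity
  have hn44 : u^44 ≤ u^8 * (1/3:ℝ)^36 := pow_helper hu0.le hu3 36 44 rfl
  norm_num at hn44
  have hn45 : u^45 ≤ u^8 * (1/3:ℝ)^37 := pow_helper hu0.le hu3 37 45 rfl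
  norm_num at hn45
  have hp46 : (0:ℝ) ≤ u^46 := by positivity
  have hp47 : (0:ℝ) ≤ u^47 := by positivity
  have hp48 : (0:ℝ) ≤ u^48 := by positivity
  have hp49 : (0:ℝ) ≤ u^49 := by positivity
  have hn50 : u^50 ≤ u^8 * (1/3:ℝ)^42 := pow_helper hu0.le hu3 42 50 rfl
  norm_num at hn50
  have hn51 : u^51 ≤ u^8 * (1/3:ℝ)^43 := pow_helper hu0.le hu3 43 51 rfl
  norm_num at hn51
  have hp52 : (0:ℝ) ≤ u^52 := by positivity
  have hp53 : (0:ℝ) ≤ u^53 := by positivity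
  have hp54 : (0:ℝ) ≤ u^54 := by positivity
  have hp55 : (0:ℝ) ≤ u^55 := by positivity
  have hp56 : (0:ℝ) ≤ u^56 := by positivity
  linarith [hp8, hp9, hp10, hn11, hn12, hp13, hp14, hp15, hp16, hp17, hn18, hn19, hp20, hp21, hp22, hp23, hp24, hn25, hn26, hp27, hp28, hp29, hp30, hn31, hn32, hn33, hp34, hp35, hp36, hn37, hn38, hn39, hp40, hp41, hp42, hp43, hn44, hn45, hp46, hp47, hp48, hp49, hn50, hn51, hp52, hp53, hp54, hp55, hp56]

theorem stmt_3 (x : ℝ) (hx : 3 ≤ x) :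
    trigamma x < Real.exp (1/x - 1/(24*x^4) + 7/(360*x^6) + 1/(90*x^7)) - 1 := by
  have hx0 : (0:ℝ) < x := by linarith
  set u : ℝ := 1/x with hu
  have hu0 : 0 < u := by positivity
  have hu3 : u ≤ 1/3 := by
    rw [hu]
    rw [div_le_div_iff₀ hx0 (by norm_num)]
    linarith
  have hEeq : 1/x - 1/(24*x^4) + 7/(360*x^6) + 1/(90*x^7)
      = u - u^4/24 + 7*u^6/360 + u^7/90 := by
    rw [hu]
    field_simp
  have hUeq : Uf x = u + u^2/2 + u^3/6 - u^5/30 + u^7/42 := by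
    unfold Uf
    rw [hu]
    field_simp
  have hE0 : 0 ≤ u - u^4/24 + 7*u^6/360 + u^7/90 := by nlinarith [pow_pos hu0 4, pow_pos hu0 6, pow_pos hu0 7, sq_nonneg u]
  have hexp := Real.sum_le_exp_of_nonneg hE0 9
  have hul := ulemma hu0 hu3
  have htri := tri_lt_Uf hx
  rw [hEeq]
  rw [hUeq] at htri
  linarith
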